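/- For every ε > 0 and every pair of points x, y in the closed disc {x ∈ ℝ² : ‖x‖ ≤ R} that lie in the same quantization bin B(n₁, n₂), one has d(x, y) ≤ ε; consequently the scheme PQ_ε is an ε-Poincaré quantization scheme, and moreover d(x, PQ_ε(x)) ≤ ε for every such x. -/

import Mathlib

noncomputable section

open Real MeasureTheory Set
open scoped InnerProductSpace ENNReal NNReal Classical

/-- Points of the plane `ℝ²`, with the Euclidean inner product and norm. -/
abbrev Pt : Type := EuclideanSpace ℝ (Fin 2)

namespace HypFL

/-- Inverse hyperbolic tangent. -/
def artanh (x : ℝ) : ℝ := (1 / 2) * Real.log ((1 + x) / (1 - x))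

/-- The Poincaré disc `B = {x : k‖x‖² < 1}` of curvature `-k`. -/
def disc (k : ℝ) : Set Pt := {x : Pt | k * ‖x‖ ^ 2 < 1}

/-- Möbius addition on the Poincaré disc. -/
def mAdd (k : ℝ) (x y : Pt) : Pt :=
  (1 + 2 * k * ⟪x, y⟫_ℝ + k ^ 2 * ‖x‖ ^ 2 * ‖y‖ ^ 2)⁻¹ •
    ((1 + 2 * k * ⟪x, y⟫_ℝ + k * ‖y‖ ^ 2) • x + (1 - k * ‖x‖ ^ 2) • y)

/-- Hyperbolic distance on the Poincaré disc. -/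
def hdist (k : ℝ) (x y : Pt) : ℝ :=
  (2 / Real.sqrt k) * artanh (Real.sqrt k * ‖mAdd k (-x) y‖)

/-- Logarithmic map at `p`. -/
def logMap (k : ℝ) (p x : Pt) : Pt :=
  if x = p then 0
  else ((((1 - k * ‖p‖ ^ 2) / Real.sqrt k) * artanh (Real.sqrt k * ‖mAdd k (-p) x‖))
      / ‖mAdd k (-p) x‖) • mAdd k (-p) x

/-- Exponential map at `p`. -/
def expMap (k : ℝ) (p v : Pt) : Pt :=
  if v = 0 then p
  else mAdd k p ((Real.tanh (Real.sqrt k * ‖v‖ / (1 - k * ‖p‖ ^ 2)) / (Real.sqrt k * ‖v‖)) • v)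

/-- The geodesic segment `[x, y] = {exp_x (t • log_x y) : t ∈ [0,1]}`. -/
def geoSeg (k : ℝ) (x y : Pt) : Set Pt :=
  (fun t : ℝ => expMap k x (t • logMap k x y)) '' Set.Icc (0 : ℝ) 1

/-- A set is geodesically convex if it contains the geodesic segment between any two
of its points. -/
def GConvex (k : ℝ) (S : Set Pt) : Prop := ∀ x ∈ S, ∀ y ∈ S, geoSeg k x y ⊆ S

/-- The geodesic convex hull of `D`: the intersection of all geodesically convex subsets
of the Poincaré disc containing `D`. -/
def gconv (k : ℝ) (D : Set Pt) : Set Pt :=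
  ⋂₀ {S : Set Pt | S ⊆ disc k ∧ GConvex k S ∧ D ⊆ S}

/-- The set of extreme points of a (finite) set `D`: points `z ∈ D` with
`z ∉ gconv (D \ {z})`. -/
def extremePts (k : ℝ) (D : Set Pt) : Set Pt := {z ∈ D | z ∉ gconv k (D \ {z})}

/-- The `CCW` predicate of the Poincaré Graham scan. -/
def ccw (k : ℝ) (x t z : Pt) : ℝ :=
  (‖logMap k x t‖⁻¹ • logMap k x t) 0 * (‖logMap k x z‖⁻¹ • logMap k x z) 1 -
    (‖logMap k x t‖⁻¹ • logMap k x t) 1 * (‖logMap k x z‖⁻¹ • logMap k x z) 0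

/-- `s = 1/√k`. -/
def sOf (k : ℝ) : ℝ := 1 / Real.sqrt k

end HypFL

namespace HypFL

/-- The hyperbolic area measure on the Poincaré disc: density `4/(1-k‖x‖²)²` with respect
to the two-dimensional Lebesgue measure. -/
def hypArea (k : ℝ) : Measure Pt :=
  volume.withDensity fun x : Pt => ENNReal.ofReal (4 / (1 - k * ‖x‖ ^ 2) ^ 2)

/-- The hyperbolic-uniform probability distribution on the closed Euclidean disc of
radius `R`: the hyperbolic area measure restricted to the disc and normalized. -/
def nu (k R : ℝ) : Measure Pt :=
  (hypArea k (Metric.closedBall 0 R))⁻¹ • (hypArea k).restrict (Metric.closedBall 0 R)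

end HypFL

namespace HypFL

/-- The polar angle of a nonzero point of `ℝ²`, normalized to lie in `(0, 2π]`. -/
def polarAngle (x : Pt) : ℝ :=
  if 0 < Complex.arg ((x 0 : ℂ) + (x 1 : ℂ) * Complex.I) then
    Complex.arg ((x 0 : ℂ) + (x 1 : ℂ) * Complex.I)
  else Complex.arg ((x 0 : ℂ) + (x 1 : ℂ) * Complex.I) + 2 * π

/-- The point of `ℝ²` with Euclidean radius `r` and polar angle `θ`. -/
def ptPolar (r θ : ℝ) : Pt := WithLp.toLp 2 ![r * Real.cos θ, r * Real.sin θ]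

/-- The hyperbolic radius `R_H = s ln((s+R)/(s−R))` corresponding to Euclidean radius `R`. -/
def RH (k R : ℝ) : ℝ := sOf k * Real.log ((sOf k + R) / (sOf k - R))

/-- Number of angular quantization bins: `N_Θ = ⌈4πs sinh(R_H/s)/ε⌉`. -/
def NTheta (k R ε : ℝ) : ℕ := ⌈4 * π * sOf k * Real.sinh (RH k R / sOf k) / ε⌉₊

/-- Number of radial quantization bins: `N_R = ⌈2R_H/ε⌉`. -/
def NRad (k R ε : ℝ) : ℕ := ⌈2 * RH k R / ε⌉₊

/-- The quantization bin `B(n₁, n₂)`: points whose polar angle lies in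
`((n₁−1)·2π/N_Θ, n₁·2π/N_Θ]` and whose hyperbolic distance to the origin lies in
`((n₂−1)·R_H/N_R, n₂·R_H/N_R]`. -/
def qbin (k R ε : ℝ) (n₁ n₂ : ℕ) : Set Pt :=
  {x : Pt |
    polarAngle x ∈ Set.Ioc (((n₁ : ℝ) - 1) * (2 * π / NTheta k R ε))
      ((n₁ : ℝ) * (2 * π / NTheta k R ε)) ∧
    hdist k 0 x ∈ Set.Ioc (((n₂ : ℝ) - 1) * (RH k R / NRad k R ε))
      ((n₂ : ℝ) * (RH k R / NRad k R ε))}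

/-- The Euclidean radius corresponding to hyperbolic radius `h`:
`s(e^{h/s} − 1)/(e^{h/s} + 1)`. -/
def eucOfHyp (k h : ℝ) : ℝ :=
  sOf k * (Real.exp (h / sOf k) - 1) / (Real.exp (h / sOf k) + 1)

/-- The `ε`-Poincaré quantization map `PQ_ε`: each point of the bin `B(n₁, n₂)` is sent to
the bin center, namely the point with polar angle `(n₁ − 1/2)·2π/N_Θ` and hyperbolic
distance `(n₂ − 1/2)·R_H/N_R` from the origin; the origin is fixed. -/
def PQ (k R ε : ℝ) (x : Pt) : Pt :=
  if x = 0 then 0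
  else
    ptPolar
      (eucOfHyp k
        (((⌈hdist k 0 x / (RH k R / NRad k R ε)⌉₊ : ℝ) - 1 / 2) * (RH k R / NRad k R ε)))
      (((⌈polarAngle x / (2 * π / NTheta k R ε)⌉₊ : ℝ) - 1 / 2) * (2 * π / NTheta k R ε))

end HypFL


namespace HypFL

lemma norm_smul_neg_add (α β : ℝ) (x y : Pt) :
    ‖α • (-x) + β • y‖ ^ 2 = α^2*‖x‖^2 - 2*(α*β)*⟪x, y⟫_ℝ + β^2*‖y‖^2 := by
  rw [norm_add_sq_real, inner_smul_left, inner_smul_right, inner_neg_left, norm_smul,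
    norm_smul, norm_neg]
  simp only [Real.norm_eq_abs, mul_pow, sq_abs, starRingEnd_apply, star_trivial]
  ring

lemma mAdd_norm_sq (k : ℝ) (x y : Pt)
    (hA : (1 - 2 * k * ⟪x, y⟫_ℝ + k ^ 2 * ‖x‖ ^ 2 * ‖y‖ ^ 2) ≠ 0) :
    ‖mAdd k (-x) y‖ ^ 2 =
      ‖x - y‖ ^ 2 / (1 - 2 * k * ⟪x, y⟫_ℝ + k ^ 2 * ‖x‖ ^ 2 * ‖y‖ ^ 2) := by
  have hxy : ‖x - y‖ ^ 2 = ‖x‖^2 - 2 * ⟪x, y⟫_ℝ + ‖y‖^2 := norm_sub_sq_real x y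
  unfold mAdd
  rw [inner_neg_left, norm_neg, norm_smul, norm_inv, mul_pow, norm_smul_neg_add, hxy]
  simp only [Real.norm_eq_abs, sq_abs]
  set c := ⟪x, y⟫_ℝ
  set a := ‖x‖ ^ 2
  set b := ‖y‖ ^ 2
  have h2 : (1 + 2 * k * -c + k ^ 2 * a * b) = (1 - 2*k*c + k^2*a*b) := by ring
  rw [h2]
  rw [inv_pow]
  rw [eq_div_iff hA, inv_mul_eq_div, div_mul_eq_mul_div, sq_abs,
    div_eq_iff (pow_ne_zero 2 hA)]
  ring

set_option maxHeartbeats 1000000 in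
lemma hdist_le_of_cosh (k : ℝ) (hk : 0 < k) (x y : Pt) (hx : k * ‖x‖^2 < 1)
    (hy : k * ‖y‖^2 < 1) (ε : ℝ) (hε : 0 ≤ ε)
    (h : 1 + 2*k*‖x-y‖^2 / ((1 - k*‖x‖^2)*(1 - k*‖y‖^2)) ≤ Real.cosh (ε * Real.sqrt k)) :
    hdist k x y ≤ ε := by
  have hsk : 0 < Real.sqrt k := Real.sqrt_pos.mpr hk
  set sk := Real.sqrt k with hsk'
  have hk2 : sk ^ 2 = k := Real.sq_sqrt hk.le
  set N := ‖x - y‖ ^ 2 with hN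
  have hN0 : 0 ≤ N := sq_nonneg _
  set P := (1 - k*‖x‖^2)*(1 - k*‖y‖^2) with hP'
  have hP : 0 < P := mul_pos (by linarith) (by linarith)
  have hxy : N = ‖x‖^2 - 2 * ⟪x, y⟫_ℝ + ‖y‖^2 := norm_sub_sq_real x y
  have hAP : (1 - 2 * k * ⟪x, y⟫_ℝ + k ^ 2 * ‖x‖ ^ 2 * ‖y‖ ^ 2) = P + k * N := by
    rw [hP', hxy]; ring
  have hA : 0 < P + k * N := by positivity
  have msq : ‖mAdd k (-x) y‖ ^ 2 = N / (P + k * N) := by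
    rw [← hAP]; exact mAdd_norm_sq k x y (by rw [hAP]; positivity)
  set t := sk * ‖mAdd k (-x) y‖ with ht'
  have ht0 : 0 ≤ t := by positivity
  have htsq : t ^ 2 = k * N / (P + k * N) := by
    rw [ht', mul_pow, hk2, msq]; ring
  set E := Real.exp (ε * sk) with hE'
  have hE : 1 ≤ E := Real.one_le_exp (by positivity)
  set C := Real.cosh (ε * sk) with hC'
  have hCE : C = (E + E⁻¹) / 2 := by rw [hC', hE', Real.cosh_eq, Real.exp_neg]
  have hC1 : 1 ≤ C := Real.one_le_cosh _
  have hmaster : 2 * k * N ≤ (C - 1) * P := by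
    have := (div_le_iff₀ hP).mp (by linarith : 2*k*N / P ≤ C - 1)
    linarith
  have hform : hdist k x y = (2 / sk) * ((1/2) *
      Real.log ((1 + t) / (1 - t))) := by rw [hdist, artanh]
  clear_value sk N P t E C
  have hEpos : 0 < E := by rw [hE']; exact Real.exp_pos _
  set τ := (E - 1) / (E + 1) with hτ'
  have hτ0 : 0 ≤ τ := div_nonneg (by linarith) (by linarith)
  have hτ1 : τ < 1 := (div_lt_one (by linarith)).mpr (by linarith)
  have hCE1 : (C - 1) * (2 * E) = (E - 1) ^ 2 := by
    rw [hCE]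
    field_simp
    ring
  have hm2 : 2*k*N*(2*E) ≤ (C-1)*P*(2*E) :=
    mul_le_mul_of_nonneg_right hmaster (by positivity)
  have hm3 : 4*E*(k*N) ≤ (E-1)^2 * P := by nlinarith [hm2, hCE1]
  have htτ : t ^ 2 ≤ τ ^ 2 := by
    rw [htsq, hτ', div_pow, div_le_div_iff₀ hA (by positivity)]
    nlinarith [hm3]
  have htle : t ≤ τ := by nlinarith
  have ht1 : t < 1 := lt_of_le_of_lt htle hτ1
  have hrpos : 0 < (1 + t) / (1 - t) := div_pos (by linarith) (by linarith)
  have hratio : (1 + t) / (1 - t) ≤ E := by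
    rw [div_le_iff₀ (by linarith)]
    have htle' : t ≤ (E - 1) / (E + 1) := hτ' ▸ htle
    have := (le_div_iff₀ (by linarith : (0:ℝ) < E + 1)).mp htle'
    nlinarith
  have hlog : Real.log ((1 + t) / (1 - t)) ≤ ε * sk := by
    calc Real.log ((1 + t) / (1 - t)) ≤ Real.log E := Real.log_le_log hrpos hratio
    _ = ε * sk := by rw [hE', Real.log_exp]
  rw [hform]
  have h2 : (2 / sk) * ((1/2) * Real.log ((1 + t) / (1 - t)))
      = Real.log ((1 + t) / (1 - t)) / sk := by ring
  rw [h2, div_le_iff₀ hsk]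
  linarith



lemma norm_sq_pt (x : Pt) : ‖x‖ ^ 2 = x 0 ^ 2 + x 1 ^ 2 := by
  rw [EuclideanSpace.norm_eq, Real.sq_sqrt (by positivity)]
  simp [Fin.sum_univ_two, sq_abs]

lemma sub_apply_pt (x y : Pt) (i : Fin 2) : (x - y) i = x i - y i := rfl

lemma inner_pt (x y : Pt) : ⟪x, y⟫_ℝ = x 0 * y 0 + x 1 * y 1 := by
  simp [PiLp.inner_apply, Fin.sum_univ_two, RCLike.inner_apply]
  ring

lemma one_sub_cos_le (t : ℝ) : 1 - Real.cos t ≤ t ^ 2 / 2 := by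
  have h := Real.sin_sq_eq_half_sub (t/2)
  have h2 : Real.sin (t/2) ^ 2 ≤ (t/2) ^ 2 := Real.sin_sq_le_sq
  have h3 : 2 * (t/2) = t := by ring
  rw [h3] at h
  nlinarith

lemma half_sq_le_cosh (t : ℝ) : 1 + t ^ 2 / 2 ≤ Real.cosh t := by
  have h0 : Real.cosh (2 * (t/2)) = Real.cosh (t/2) ^ 2 + Real.sinh (t/2) ^ 2 :=
    Real.cosh_two_mul (t/2)
  have h3 : 2 * (t/2) = t := by ring
  rw [h3] at h0
  have hc := Real.cosh_sq (t/2)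
  have h2 : (t/2) ^ 2 ≤ Real.sinh (t/2) ^ 2 := by
    rcases le_or_gt 0 t with h | h
    · have h4 : t/2 ≤ Real.sinh (t/2) := Real.self_le_sinh_iff.mpr (by linarith)
      nlinarith
    · have h4 : -(t/2) ≤ Real.sinh (-(t/2)) := Real.self_le_sinh_iff.mpr (by linarith)
      rw [Real.sinh_neg] at h4
      nlinarith
  nlinarith

lemma cosh_add_cosh (p q : ℝ) (hp : 0 ≤ p) (hq : 0 ≤ q) :
    Real.cosh p + Real.cosh q ≤ 1 + Real.cosh (p + q) := by
  rw [Real.cosh_add]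
  nlinarith [Real.one_le_cosh p, Real.one_le_cosh q, Real.sinh_nonneg_iff.mpr hp,
    Real.sinh_nonneg_iff.mpr hq]

set_option maxHeartbeats 1000000 in
lemma key (k : ℝ) (hk : 0 < k) (x y : Pt) (ρ1 ρ2 θ1 θ2 r1 r2 RB δ τ ε : ℝ)
    (hx0 : x 0 = ρ1 * Real.cos θ1) (hx1 : x 1 = ρ1 * Real.sin θ1)
    (hy0 : y 0 = ρ2 * Real.cos θ2) (hy1 : y 1 = ρ2 * Real.sin θ2)
    (hρ1 : Real.sqrt k * ρ1 = (Real.exp (r1 * Real.sqrt k) - 1) /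
      (Real.exp (r1 * Real.sqrt k) + 1))
    (hρ2 : Real.sqrt k * ρ2 = (Real.exp (r2 * Real.sqrt k) - 1) /
      (Real.exp (r2 * Real.sqrt k) + 1))
    (hr10 : 0 ≤ r1) (hr20 : 0 ≤ r2) (hr1R : r1 ≤ RB) (hr2R : r2 ≤ RB)
    (hδ : |r1 - r2| ≤ δ) (hτ : |θ1 - θ2| ≤ τ)
    (hδε : δ ≤ ε / 2)
    (hτε : Real.sinh (RB * Real.sqrt k) * τ / Real.sqrt k ≤ ε / 2) :
    hdist k x y ≤ ε := by
  have hsk : 0 < Real.sqrt k := Real.sqrt_pos.mpr hk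
  set sk := Real.sqrt k with hsk'
  have hk2 : sk ^ 2 = k := Real.sq_sqrt hk.le
  have hδ0 : 0 ≤ δ := le_trans (abs_nonneg _) hδ
  have hτ0 : 0 ≤ τ := le_trans (abs_nonneg _) hτ
  have hε : 0 ≤ ε := by
    have : 0 ≤ ε / 2 := le_trans hδ0 hδε
    linarith
  set E1 := Real.exp (r1 * sk) with hE1'
  set E2 := Real.exp (r2 * sk) with hE2'
  have hE1 : 1 ≤ E1 := hE1' ▸ Real.one_le_exp (by positivity)
  have hE2 : 1 ≤ E2 := hE2' ▸ Real.one_le_exp (by positivity)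
  have hterm1 : (E1 - E2)^2 / (2*E1*E2) = Real.cosh ((r1 - r2) * sk) - 1 := by
    rw [Real.cosh_eq]
    have e1 : (r1 - r2) * sk = r1 * sk - r2 * sk := by ring
    rw [e1, Real.exp_sub, ← hE1', ← hE2', neg_sub, Real.exp_sub, ← hE1', ← hE2']
    have hE1p : (0:ℝ) < E1 := by linarith
    have hE2p : (0:ℝ) < E2 := by linarith
    field_simp
    ring
  have hterm2 : (E1^2 - 1)*(E2^2 - 1) / (4*E1*E2)
      = Real.sinh (r1 * sk) * Real.sinh (r2 * sk) := by
    rw [Real.sinh_eq, Real.sinh_eq, Real.exp_neg, Real.exp_neg, ← hE1', ← hE2']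
    have hE1p : (0:ℝ) < E1 := by linarith
    have hE2p : (0:ℝ) < E2 := by linarith
    field_simp
    ring
  clear_value E1 E2
  set u := (E1 - 1) / (E1 + 1) with hu'
  set v := (E2 - 1) / (E2 + 1) with hv'
  have hE1p : (0:ℝ) < E1 := by linarith
  have hE2p : (0:ℝ) < E2 := by linarith
  have hu0 : 0 ≤ u := hu' ▸ div_nonneg (by linarith) (by linarith)
  have hv0 : 0 ≤ v := hv' ▸ div_nonneg (by linarith) (by linarith)
  have hu1 : u < 1 := hu' ▸ (div_lt_one (by linarith)).mpr (by linarith)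
  have hv1 : v < 1 := hv' ▸ (div_lt_one (by linarith)).mpr (by linarith)
  set c := Real.cos (θ1 - θ2) with hc'
  have hc1 : c ≤ 1 := hc' ▸ Real.cos_le_one _
  have h1c : 1 - c ≤ τ^2 / 2 := by
    have h1 := one_sub_cos_le (θ1 - θ2)
    have h2 : (θ1 - θ2)^2 ≤ τ^2 := sq_le_sq' (by cases' abs_le.mp hτ with h3 h4; linarith)
      (by cases' abs_le.mp hτ with h3 h4; linarith)
    rw [hc']; linarith
  have h1c0 : 0 ≤ 1 - c := by linarith
  have hpy1 := Real.sin_sq_add_cos_sq θ1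
  have hpy2 := Real.sin_sq_add_cos_sq θ2
  have hxn : k * ‖x‖ ^ 2 = u ^ 2 := by
    rw [norm_sq_pt, hx0, hx1, ← hρ1, ← hk2]
    linear_combination (sk^2 * ρ1^2) * hpy1
  have hyn : k * ‖y‖ ^ 2 = v ^ 2 := by
    rw [norm_sq_pt, hy0, hy1, ← hρ2, ← hk2]
    linear_combination (sk^2 * ρ2^2) * hpy2
  have hN : k * ‖x - y‖ ^ 2 = u^2 + v^2 - 2*u*v*c := by
    rw [norm_sq_pt, sub_apply_pt, sub_apply_pt, hx0, hx1, hy0, hy1, hc', Real.cos_sub,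
      ← hρ1, ← hρ2, ← hk2]
    linear_combination (sk^2*ρ1^2) * hpy1 + (sk^2*ρ2^2) * hpy2
  have hdx : k * ‖x‖ ^ 2 < 1 := by
    rw [hxn]; exact pow_lt_one₀ hu0 hu1 two_ne_zero
  have hdy : k * ‖y‖ ^ 2 < 1 := by
    rw [hyn]; exact pow_lt_one₀ hv0 hv1 two_ne_zero
  set S := Real.sinh (RB * sk) with hS'
  have hRB0 : 0 ≤ RB := le_trans hr10 hr1R
  have hS0 : 0 ≤ S := hS' ▸ Real.sinh_nonneg_iff.mpr (by positivity)
  have hsinh1 : Real.sinh (r1 * sk) ≤ S := by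
    rw [hS']; exact Real.sinh_le_sinh.mpr (mul_le_mul_of_nonneg_right hr1R hsk.le)
  have hsinh2 : Real.sinh (r2 * sk) ≤ S := by
    rw [hS']; exact Real.sinh_le_sinh.mpr (mul_le_mul_of_nonneg_right hr2R hsk.le)
  have hsinh10 : 0 ≤ Real.sinh (r1 * sk) := Real.sinh_nonneg_iff.mpr (by positivity)
  have hsinh20 : 0 ≤ Real.sinh (r2 * sk) := Real.sinh_nonneg_iff.mpr (by positivity)
  set q := S * τ with hq'
  have hq0 : 0 ≤ q := hq' ▸ mul_nonneg hS0 hτ0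
  have hqε : q ≤ sk * (ε / 2) := by
    have h5 := (div_le_iff₀ hsk).mp hτε
    rw [hq']
    calc S * τ ≤ ε / 2 * sk := h5
    _ = sk * (ε/2) := mul_comm _ _
  have hδε' : δ * sk ≤ sk * (ε / 2) := by
    calc δ * sk ≤ (ε/2) * sk := mul_le_mul_of_nonneg_right hδε hsk.le
    _ = sk * (ε/2) := mul_comm _ _
  have hQ : 2 * (u^2 + v^2 - 2*u*v*c) / ((1 - u^2) * (1 - v^2))
      = (E1 - E2)^2 / (2*E1*E2) + (E1^2 - 1)*(E2^2 - 1)*(1 - c) / (4*E1*E2) := by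
    have hu2 : 0 < 1 - u^2 := by
      have : u^2 < 1 := pow_lt_one₀ hu0 hu1 two_ne_zero
      linarith
    have hv2 : 0 < 1 - v^2 := by
      have : v^2 < 1 := pow_lt_one₀ hv0 hv1 two_ne_zero
      linarith
    have hstep : 2 * (u^2 + v^2 - 2*u*v*c) / ((1 - u^2) * (1 - v^2))
        = (2*(E1 - E2)^2 + (E1^2 - 1)*(E2^2 - 1)*(1 - c)) / (4*E1*E2) := by
      rw [div_eq_div_iff (by positivity) (by positivity)]
      rw [hu', hv']
      have h1 : E1 + 1 ≠ 0 := by positivity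
      have h2 : E2 + 1 ≠ 0 := by positivity
      field_simp
      ring
    rw [hstep]
    ring
  have hterm1le : Real.cosh ((r1 - r2) * sk) ≤ Real.cosh (δ * sk) := by
    rw [Real.cosh_le_cosh, abs_mul, abs_mul, abs_of_pos hsk, abs_of_nonneg hδ0]
    exact mul_le_mul_of_nonneg_right hδ hsk.le
  have hterm2le : (E1^2 - 1)*(E2^2 - 1)*(1 - c) / (4*E1*E2) ≤ q^2/2 := by
    have e : (E1^2 - 1)*(E2^2 - 1)*(1 - c) / (4*E1*E2)
        = ((E1^2 - 1)*(E2^2 - 1) / (4*E1*E2)) * (1 - c) := by ring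
    rw [e, hterm2]
    have hb : Real.sinh (r1 * sk) * Real.sinh (r2 * sk) ≤ S^2 := by
      have h6 := mul_le_mul hsinh1 hsinh2 hsinh20 hS0
      calc Real.sinh (r1 * sk) * Real.sinh (r2 * sk) ≤ S * S := h6
      _ = S^2 := (sq S).symm
    have he : S^2 * (τ^2/2) = q^2/2 := by rw [hq']; ring
    calc Real.sinh (r1 * sk) * Real.sinh (r2 * sk) * (1 - c)
        ≤ S^2 * (τ^2/2) := mul_le_mul hb h1c h1c0 (sq_nonneg S)
      _ = q^2/2 := he
  clear_value u v c S q sk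
  have hcoshq := half_sq_le_cosh q
  have hsum := cosh_add_cosh (δ * sk) q (mul_nonneg hδ0 hsk.le) hq0
  have hfin : Real.cosh (δ * sk + q) ≤ Real.cosh (ε * sk) := by
    rw [Real.cosh_le_cosh, abs_of_nonneg (add_nonneg (mul_nonneg hδ0 hsk.le) hq0),
      abs_of_nonneg (mul_nonneg hε hsk.le)]
    have he : sk * (ε/2) + sk * (ε/2) = ε * sk := by ring
    linarith
  have hrw : 2*k*‖x - y‖^2 / ((1 - k*‖x‖^2)*(1 - k*‖y‖^2))
      = 2 * (u^2 + v^2 - 2*u*v*c) / ((1 - u^2) * (1 - v^2)) := by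
    rw [hxn, hyn]
    have h7 : 2*k*‖x - y‖^2 = 2 * (u^2 + v^2 - 2*u*v*c) := by rw [← hN]; ring
    rw [h7]
  have hA1 : (E1 - E2)^2 / (2*E1*E2) ≤ Real.cosh (δ * sk) - 1 := by
    rw [hterm1]; linarith
  have hmain : 1 + 2*k*‖x - y‖^2 / ((1 - k*‖x‖^2)*(1 - k*‖y‖^2)) ≤ Real.cosh (ε * sk) := by
    rw [hrw, hQ]
    linarith
  exact hdist_le_of_cosh k hk x y hdx hdy ε hε (by rw [← hsk']; exact hmain)

lemma mAdd_zero (k : ℝ) (x : Pt) : mAdd k (-0) x = x := by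
  simp [mAdd]

lemma hdist_zero (k : ℝ) (x : Pt) :
    hdist k 0 x = (1 / Real.sqrt k) * Real.log ((1 + Real.sqrt k * ‖x‖) / (1 - Real.sqrt k * ‖x‖)) := by
  rw [hdist, mAdd_zero, artanh]; ring

lemma hdist_zero_self (k : ℝ) : hdist k (0:Pt) 0 = 0 := by
  rw [hdist_zero]; simp

lemma exp_hdist_zero (k : ℝ) (hk : 0 < k) (x : Pt) (hu : Real.sqrt k * ‖x‖ < 1) :
    Real.exp (hdist k 0 x * Real.sqrt k) = (1 + Real.sqrt k * ‖x‖) / (1 - Real.sqrt k * ‖x‖) := by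
  have hsk : 0 < Real.sqrt k := Real.sqrt_pos.mpr hk
  have hu0 : 0 ≤ Real.sqrt k * ‖x‖ := by positivity
  rw [hdist_zero]
  have h1 : 1 / Real.sqrt k * Real.log ((1 + Real.sqrt k * ‖x‖) / (1 - Real.sqrt k * ‖x‖)) * Real.sqrt k
      = Real.log ((1 + Real.sqrt k * ‖x‖) / (1 - Real.sqrt k * ‖x‖)) := by
    field_simp
  rw [h1, Real.exp_log (div_pos (by linarith) (by linarith))]

lemma u_of_hdist (k : ℝ) (hk : 0 < k) (x : Pt) (hu : Real.sqrt k * ‖x‖ < 1) :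
    Real.sqrt k * ‖x‖ = (Real.exp (hdist k 0 x * Real.sqrt k) - 1) /
      (Real.exp (hdist k 0 x * Real.sqrt k) + 1) := by
  rw [exp_hdist_zero k hk x hu]
  have h1 : (0:ℝ) < 1 - Real.sqrt k * ‖x‖ := by linarith
  field_simp
  ring

lemma RH_eq (k : ℝ) (hk : 0 < k) (R : ℝ) :
    RH k R = (1 / Real.sqrt k) * Real.log ((1 + Real.sqrt k * R) / (1 - Real.sqrt k * R)) := by
  have hsk : 0 < Real.sqrt k := Real.sqrt_pos.mpr hk
  rw [RH, sOf]
  congr 1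
  have h : (1 / Real.sqrt k + R) / (1 / Real.sqrt k - R)
      = (Real.sqrt k * (1 / Real.sqrt k + R)) / (Real.sqrt k * (1 / Real.sqrt k - R)) :=
    (mul_div_mul_left _ _ (ne_of_gt hsk)).symm
  rw [h]
  congr 1 <;> (field_simp; try ring)
lemma hdist_zero_nonneg (k : ℝ) (hk : 0 < k) (x : Pt) (hu : Real.sqrt k * ‖x‖ < 1) :
    0 ≤ hdist k 0 x := by
  have hsk : 0 < Real.sqrt k := Real.sqrt_pos.mpr hk
  have hu0 : 0 ≤ Real.sqrt k * ‖x‖ := by positivity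
  rw [hdist_zero]
  have : (1:ℝ) ≤ (1 + Real.sqrt k * ‖x‖) / (1 - Real.sqrt k * ‖x‖) :=
    (le_div_iff₀ (by linarith)).mpr (by linarith)
  have := Real.log_nonneg this
  positivity

lemma hdist_zero_pos (k : ℝ) (hk : 0 < k) (x : Pt) (hx : x ≠ 0) (hu : Real.sqrt k * ‖x‖ < 1) :
    0 < hdist k 0 x := by
  have hsk : 0 < Real.sqrt k := Real.sqrt_pos.mpr hk
  have hx0 : 0 < ‖x‖ := norm_pos_iff.mpr hx
  have hu0 : 0 < Real.sqrt k * ‖x‖ := by positivity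
  rw [hdist_zero]
  have h1 : (1:ℝ) < (1 + Real.sqrt k * ‖x‖) / (1 - Real.sqrt k * ‖x‖) :=
    (lt_div_iff₀ (by linarith)).mpr (by linarith)
  have := Real.log_pos h1
  positivity

lemma hdist_zero_le_RH (k R : ℝ) (hk : 0 < k) (hRs : R < sOf k) (x : Pt) (hx : ‖x‖ ≤ R) :
    hdist k 0 x ≤ RH k R := by
  have hsk : 0 < Real.sqrt k := Real.sqrt_pos.mpr hk
  have hU : Real.sqrt k * R < 1 := by
    have := (mul_lt_mul_iff_right₀ hsk).mpr hRs
    rw [sOf] at this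
    calc Real.sqrt k * R < Real.sqrt k * (1 / Real.sqrt k) := this
    _ = 1 := by field_simp
  have hu : Real.sqrt k * ‖x‖ ≤ Real.sqrt k * R := by
    exact mul_le_mul_of_nonneg_left hx hsk.le
  have hu0 : 0 ≤ Real.sqrt k * ‖x‖ := by positivity
  rw [hdist_zero, RH_eq k hk R]
  have hmono : (1 + Real.sqrt k * ‖x‖) / (1 - Real.sqrt k * ‖x‖)
      ≤ (1 + Real.sqrt k * R) / (1 - Real.sqrt k * R) := by
    rw [div_le_div_iff₀ (by linarith) (by linarith)]
    nlinarith
  have hlog := Real.log_le_log (div_pos (by linarith) (by linarith)) hmono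
  have h2 : (0:ℝ) ≤ 1 / Real.sqrt k := by positivity
  exact mul_le_mul_of_nonneg_left hlog h2

lemma polarAngle_pos (x : Pt) : 0 < polarAngle x := by
  rw [polarAngle]
  split_ifs with h
  · exact h
  · have := Complex.neg_pi_lt_arg ((x 0 : ℂ) + (x 1 : ℂ) * Complex.I)
    have hπ := Real.pi_pos
    linarith

lemma polarAngle_le (x : Pt) : polarAngle x ≤ 2 * π := by
  rw [polarAngle]
  have h1 := Complex.arg_le_pi ((x 0 : ℂ) + (x 1 : ℂ) * Complex.I)
  have hπ := Real.pi_pos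
  split_ifs with h
  · linarith
  · push_neg at h
    linarith

lemma coords (x : Pt) (hx : x ≠ 0) :
    x 0 = ‖x‖ * Real.cos (polarAngle x) ∧ x 1 = ‖x‖ * Real.sin (polarAngle x) := by
  set z : ℂ := (x 0 : ℂ) + (x 1 : ℂ) * Complex.I with hz'
  have hre : z.re = x 0 := by simp [hz']
  have him : z.im = x 1 := by simp [hz']
  have hnx : 0 < ‖x‖ := norm_pos_iff.mpr hx
  have hz : z ≠ 0 := by
    intro h
    have h0 : x 0 = 0 := by rw [← hre, h]; simp
    have h1 : x 1 = 0 := by rw [← him, h]; simp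
    have : ‖x‖ ^ 2 = 0 := by rw [norm_sq_pt, h0, h1]; ring
    nlinarith
  have habs : ‖z‖ = ‖x‖ := by
    rw [Complex.norm_def, Complex.normSq_apply, hre, him]
    rw [show x 0 * x 0 + x 1 * x 1 = ‖x‖^2 by rw [norm_sq_pt]; ring]
    exact Real.sqrt_sq (norm_nonneg x)
  have hcos := Complex.cos_arg hz
  have hsin := Complex.sin_arg z
  have hcpa : Real.cos (polarAngle x) = Real.cos z.arg := by
    rw [polarAngle, ← hz']
    split_ifs
    · rfl
    · exact Real.cos_add_two_pi _
  have hspa : Real.sin (polarAngle x) = Real.sin z.arg := by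
    rw [polarAngle, ← hz']
    split_ifs
    · rfl
    · exact Real.sin_add_two_pi _
  constructor
  · rw [hcpa, hcos, habs, hre]
    field_simp
  · rw [hspa, hsin, habs, him]
    field_simp

lemma ptPolar_coords (r θ : ℝ) :
    (ptPolar r θ) 0 = r * Real.cos θ ∧ (ptPolar r θ) 1 = r * Real.sin θ := by
  constructor <;> simp [ptPolar]

lemma eucOfHyp_exp (k : ℝ) (hk : 0 < k) (h : ℝ) :
    Real.sqrt k * eucOfHyp k h =
      (Real.exp (h * Real.sqrt k) - 1) / (Real.exp (h * Real.sqrt k) + 1) := by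
  have hsk : 0 < Real.sqrt k := Real.sqrt_pos.mpr hk
  rw [eucOfHyp, sOf]
  have h1 : h / (1 / Real.sqrt k) = h * Real.sqrt k := by field_simp
  rw [h1]
  have h2 : Real.exp (h * Real.sqrt k) + 1 ≠ 0 := by positivity
  field_simp

end HypFL

namespace HypFL

/-- For every `ε > 0`, any two points of the closed disc of Euclidean
radius `R` lying in the same quantization bin `B(n₁, n₂)` are at hyperbolic distance at
most `ε` — so `PQ_ε` is an `ε`-Poincaré quantization scheme — and moreover
`d(x, PQ_ε(x)) ≤ ε` for every such point `x`. -/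
theorem pq_is_eps_quantization (k R ε : ℝ) (hk : 0 < k) (hR : 0 < R) (hRs : R < sOf k)
    (hε : 0 < ε) :
    (∀ n₁ ∈ Finset.Icc 1 (NTheta k R ε), ∀ n₂ ∈ Finset.Icc 1 (NRad k R ε),
      ∀ x ∈ Metric.closedBall (0 : Pt) R, ∀ y ∈ Metric.closedBall (0 : Pt) R,
        x ∈ qbin k R ε n₁ n₂ → y ∈ qbin k R ε n₁ n₂ → hdist k x y ≤ ε) ∧
    (∀ x ∈ Metric.closedBall (0 : Pt) R, hdist k x (PQ k R ε x) ≤ ε) := by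
  have hsk : 0 < Real.sqrt k := Real.sqrt_pos.mpr hk
  have hπ := Real.pi_pos
  have hU : Real.sqrt k * R < 1 := by
    have h1 := (mul_lt_mul_iff_right₀ hsk).mpr hRs
    rw [sOf] at h1
    calc Real.sqrt k * R < Real.sqrt k * (1 / Real.sqrt k) := h1
    _ = 1 := by field_simp
  have hRH : 0 < RH k R := by
    rw [RH_eq k hk R]
    have hR' : 0 < Real.sqrt k * R := by positivity
    have hr : 1 < (1 + Real.sqrt k * R) / (1 - Real.sqrt k * R) := by
      rw [lt_div_iff₀ (by linarith)]
      linarith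
    have h2 := Real.log_pos hr
    positivity
  have hs0 : 0 < sOf k := by rw [sOf]; positivity
  have hdivs : RH k R / sOf k = RH k R * Real.sqrt k := by rw [sOf]; field_simp
  have hSpos : 0 < Real.sinh (RH k R * Real.sqrt k) :=
    Real.sinh_pos_iff.mpr (by positivity)
  have hNRpos : 0 < NRad k R ε := by
    rw [NRad]; exact Nat.ceil_pos.mpr (div_pos (by linarith) hε)
  have hNRr : (0:ℝ) < (NRad k R ε : ℝ) := by exact_mod_cast hNRpos
  have hNTpos : 0 < NTheta k R ε := by
    rw [NTheta]
    refine Nat.ceil_pos.mpr (div_pos ?_ hε)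
    have h3 : 0 < Real.sinh (RH k R / sOf k) := Real.sinh_pos_iff.mpr (div_pos hRH hs0)
    positivity
  have hNTr : (0:ℝ) < (NTheta k R ε : ℝ) := by exact_mod_cast hNTpos
  set Δ := RH k R / (NRad k R ε : ℝ) with hΔ'
  set T := 2 * π / (NTheta k R ε : ℝ) with hT'
  have hΔpos : 0 < Δ := div_pos hRH hNRr
  have hTpos : 0 < T := div_pos (by positivity) hNTr
  have hΔε : Δ ≤ ε / 2 := by
    have h1 : 2 * RH k R / ε ≤ (NRad k R ε : ℝ) := by rw [NRad]; exact Nat.le_ceil _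
    have h2 : 2 * RH k R ≤ ε * (NRad k R ε : ℝ) := by
      have h3 := (div_le_iff₀ hε).mp h1; linarith
    rw [hΔ', div_le_iff₀ hNRr]
    linarith
  have hNRΔ : (NRad k R ε : ℝ) * Δ = RH k R := by
    rw [hΔ']; field_simp
  have hTε : Real.sinh (RH k R * Real.sqrt k) * T / Real.sqrt k ≤ ε / 2 := by
    have h1 : 4 * π * sOf k * Real.sinh (RH k R / sOf k) / ε ≤ (NTheta k R ε : ℝ) := by
      rw [NTheta]; exact Nat.le_ceil _
    rw [hdivs, sOf] at h1
    have h2 : 4 * π * (1 / Real.sqrt k) * Real.sinh (RH k R * Real.sqrt k)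
        ≤ ε * (NTheta k R ε : ℝ) := by
      have h3 := (div_le_iff₀ hε).mp h1; linarith
    have h3 : 4 * π * Real.sinh (RH k R * Real.sqrt k)
        ≤ ε * Real.sqrt k * (NTheta k R ε : ℝ) := by
      have h4 := mul_le_mul_of_nonneg_left h2 hsk.le
      calc 4 * π * Real.sinh (RH k R * Real.sqrt k)
          = Real.sqrt k * (4 * π * (1 / Real.sqrt k) * Real.sinh (RH k R * Real.sqrt k)) := by
            field_simp
      _ ≤ Real.sqrt k * (ε * (NTheta k R ε : ℝ)) := h4
      _ = ε * Real.sqrt k * (NTheta k R ε : ℝ) := by ring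
    have h5 : Real.sinh (RH k R * Real.sqrt k) * T / Real.sqrt k
        = 2 * π * Real.sinh (RH k R * Real.sqrt k) / ((NTheta k R ε : ℝ) * Real.sqrt k) := by
      rw [hT']; field_simp
    rw [h5, div_le_iff₀ (by positivity)]
    linarith
  clear_value Δ T
  constructor
  · intro n₁ hn₁ n₂ hn₂ x hx y hy hbx hby
    obtain ⟨h1n₁, h2n₁⟩ := Finset.mem_Icc.mp hn₁
    obtain ⟨h1n₂, h2n₂⟩ := Finset.mem_Icc.mp hn₂
    have hn₂1 : (1:ℝ) ≤ (n₂:ℝ) := by exact_mod_cast h1n₂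
    have hn₁1 : (1:ℝ) ≤ (n₁:ℝ) := by exact_mod_cast h1n₁
    obtain ⟨hθx, hrx⟩ := hbx
    obtain ⟨hθy, hry⟩ := hby
    rw [← hΔ'] at hrx hry
    rw [← hT'] at hθx hθy
    obtain ⟨hrx1, hrx2⟩ := hrx
    obtain ⟨hry1, hry2⟩ := hry
    obtain ⟨hθx1, hθx2⟩ := hθx
    obtain ⟨hθy1, hθy2⟩ := hθy
    have hxR : ‖x‖ ≤ R := mem_closedBall_zero_iff.mp hx
    have hyR : ‖y‖ ≤ R := mem_closedBall_zero_iff.mp hy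
    have hux : Real.sqrt k * ‖x‖ < 1 :=
      lt_of_le_of_lt (by exact mul_le_mul_of_nonneg_left hxR hsk.le) hU
    have huy : Real.sqrt k * ‖y‖ < 1 :=
      lt_of_le_of_lt (by exact mul_le_mul_of_nonneg_left hyR hsk.le) hU
    have hlow : 0 ≤ ((n₂:ℝ) - 1) * Δ := mul_nonneg (by linarith) hΔpos.le
    have hx0 : x ≠ 0 := by
      intro h0
      rw [h0, hdist_zero_self] at hrx1
      linarith
    have hy0 : y ≠ 0 := by
      intro h0
      rw [h0, hdist_zero_self] at hry1
      linarith
    obtain ⟨hxc0, hxc1⟩ := coords x hx0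
    obtain ⟨hyc0, hyc1⟩ := coords y hy0
    have hr10 : 0 ≤ hdist k 0 x := by linarith
    have hr20 : 0 ≤ hdist k 0 y := by linarith
    have hr1R : hdist k 0 x ≤ RH k R := hdist_zero_le_RH k R hk hRs x hxR
    have hr2R : hdist k 0 y ≤ RH k R := hdist_zero_le_RH k R hk hRs y hyR
    have hδabs : |hdist k 0 x - hdist k 0 y| ≤ Δ := by
      rw [abs_le]
      constructor <;> linarith [hrx1, hrx2, hry1, hry2]
    have hτabs : |polarAngle x - polarAngle y| ≤ T := by
      rw [abs_le]
      constructor <;> linarith [hθx1, hθx2, hθy1, hθy2]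
    exact key k hk x y ‖x‖ ‖y‖ (polarAngle x) (polarAngle y) (hdist k 0 x) (hdist k 0 y)
      (RH k R) Δ T ε hxc0 hxc1 hyc0 hyc1
      (u_of_hdist k hk x hux) (u_of_hdist k hk y huy)
      hr10 hr20 hr1R hr2R hδabs hτabs hΔε hTε
  · intro x hx
    by_cases hx0 : x = 0
    · rw [hx0]
      simp only [PQ, if_pos]
      rw [hdist_zero_self]
      linarith
    · have hxR : ‖x‖ ≤ R := mem_closedBall_zero_iff.mp hx
      have hux : Real.sqrt k * ‖x‖ < 1 :=
        lt_of_le_of_lt (by exact mul_le_mul_of_nonneg_left hxR hsk.le) hU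
      have hr1pos : 0 < hdist k 0 x := hdist_zero_pos k hk x hx0 hux
      have hr1R : hdist k 0 x ≤ RH k R := hdist_zero_le_RH k R hk hRs x hxR
      have hθpos : 0 < polarAngle x := polarAngle_pos x
      simp only [PQ, if_neg hx0]
      rw [← hΔ', ← hT']
      set n₂ := ⌈hdist k 0 x / Δ⌉₊ with hn₂'
      set n₁ := ⌈polarAngle x / T⌉₊ with hn₁'
      have hc1 : hdist k 0 x / Δ ≤ (n₂:ℝ) := by rw [hn₂']; exact Nat.le_ceil _
      have hc2 : (n₂:ℝ) < hdist k 0 x / Δ + 1 := by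
        rw [hn₂']; exact Nat.ceil_lt_add_one (div_nonneg hr1pos.le hΔpos.le)
      have hb1 : hdist k 0 x ≤ (n₂:ℝ) * Δ := by
        have h6 := (div_le_iff₀ hΔpos).mp hc1; linarith
      have hb2 : ((n₂:ℝ) - 1) * Δ < hdist k 0 x := by
        have h6 : (n₂:ℝ) - 1 < hdist k 0 x / Δ := by linarith
        have h7 := (lt_div_iff₀ hΔpos).mp h6; linarith
      have hn₂1 : 1 ≤ n₂ := by
        rw [hn₂']; exact Nat.one_le_iff_ne_zero.mpr
          (Nat.pos_iff_ne_zero.mp (Nat.ceil_pos.mpr (div_pos hr1pos hΔpos)))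
      have hn₂1' : (1:ℝ) ≤ (n₂:ℝ) := by exact_mod_cast hn₂1
      have hr20 : 0 ≤ ((n₂:ℝ) - 1/2) * Δ := mul_nonneg (by linarith) hΔpos.le
      have hn₂NR : n₂ ≤ NRad k R ε := by
        rw [hn₂']
        apply Nat.ceil_le.mpr
        rw [div_le_iff₀ hΔpos]
        linarith
      have hn₂NR' : (n₂:ℝ) ≤ (NRad k R ε : ℝ) := by exact_mod_cast hn₂NR
      have hr2R : ((n₂:ℝ) - 1/2) * Δ ≤ RH k R := by
        calc ((n₂:ℝ) - 1/2) * Δ ≤ (NRad k R ε : ℝ) * Δ :=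
          mul_le_mul_of_nonneg_right (by linarith) hΔpos.le
        _ = RH k R := hNRΔ
      have hδabs : |hdist k 0 x - ((n₂:ℝ) - 1/2) * Δ| ≤ Δ := by
        rw [abs_le]
        constructor <;> linarith [hb1, hb2]
      have hd1 : polarAngle x / T ≤ (n₁:ℝ) := by rw [hn₁']; exact Nat.le_ceil _
      have hd2 : (n₁:ℝ) < polarAngle x / T + 1 := by
        rw [hn₁']; exact Nat.ceil_lt_add_one (div_nonneg hθpos.le hTpos.le)
      have he1 : polarAngle x ≤ (n₁:ℝ) * T := by
        have h6 := (div_le_iff₀ hTpos).mp hd1; linarith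
      have he2 : ((n₁:ℝ) - 1) * T < polarAngle x := by
        have h6 : (n₁:ℝ) - 1 < polarAngle x / T := by linarith
        have h7 := (lt_div_iff₀ hTpos).mp h6; linarith
      have hτabs : |polarAngle x - ((n₁:ℝ) - 1/2) * T| ≤ T := by
        rw [abs_le]
        constructor <;> linarith [he1, he2]
      obtain ⟨hxc0, hxc1⟩ := coords x hx0
      obtain ⟨hyc0, hyc1⟩ :=
        ptPolar_coords (eucOfHyp k (((n₂:ℝ) - 1/2) * Δ)) (((n₁:ℝ) - 1/2) * T)
      exact key k hk x _ ‖x‖ (eucOfHyp k (((n₂:ℝ) - 1/2) * Δ)) (polarAngle x)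
        (((n₁:ℝ) - 1/2) * T) (hdist k 0 x) (((n₂:ℝ) - 1/2) * Δ)
        (RH k R) Δ T ε hxc0 hxc1 hyc0 hyc1
        (u_of_hdist k hk x hux) (eucOfHyp_exp k hk _)
        hr1pos.le hr20 hr1R hr2R hδabs hτabs hΔε hTε

end HypFL
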